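/- Let α and β be nonempty finite types. Let S₁ be a finite set of functions from α to α with a probability assignment c : S₁ → ℝ satisfying 0 < c f for all f ∈ S₁, with transition matrix T₁ defined by (T₁) u v = ∑_{f ∈ S₁, f u = v} c f; similarly let S₂ be a finite set of functions from β to β with probability assignment d : S₂ → ℝ satisfying 0 < d g for all g ∈ S₂, with transition matrix T₂. Suppose the two systems are equivalent, that is, there are bijections h : α ≃ β and μ : S₁ ≃ S₂ such that μ f = h ∘ f ∘ h⁻¹ for every f ∈ S₁. Then for every m ∈ ℕ and all u, v ∈ α, (T₁^m) u v ≠ 0 if and only if (T₂^m) (h u) (h v) ≠ 0. -/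
import Mathlib


/-- The transition matrix of a probabilistic function system:
`T u v = ∑_{f ∈ S, f u = v} c f`. -/
noncomputable def transitionMatrix {α : Type*} [Fintype α] [DecidableEq α]
    (S : Finset (α → α)) (c : (α → α) → ℝ) : Matrix α α ℝ :=
  fun u v => ∑ f ∈ S.filter (fun f => f u = v), c f

lemma transitionMatrix_nonneg {α : Type*} [Fintype α] [DecidableEq α]
    (S : Finset (α → α)) (c : (α → α) → ℝ) (hc : ∀ f ∈ S, 0 < c f)
    (u v : α) : 0 ≤ transitionMatrix S c u v := by
  apply Finset.sum_nonneg
  intro f hf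
  exact (hc f (Finset.mem_filter.mp hf).1).le

lemma transitionMatrix_pow_nonneg {α : Type*} [Fintype α] [DecidableEq α]
    (S : Finset (α → α)) (c : (α → α) → ℝ) (hc : ∀ f ∈ S, 0 < c f)
    (m : ℕ) (u v : α) : 0 ≤ ((transitionMatrix S c) ^ m) u v := by
  induction m generalizing u v with
  | zero =>
    simp [Matrix.one_apply]
    positivity
  | succ n ih =>
    rw [pow_succ', Matrix.mul_apply]
    apply Finset.sum_nonneg
    intro w _
    exact mul_nonneg (transitionMatrix_nonneg S c hc u w) (ih w v)

lemma transitionMatrix_ne_zero_iff {α : Type*} [Fintype α] [DecidableEq α]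
    (S : Finset (α → α)) (c : (α → α) → ℝ) (hc : ∀ f ∈ S, 0 < c f)
    (u v : α) : transitionMatrix S c u v ≠ 0 ↔ ∃ f ∈ S, f u = v := by
  constructor
  · intro hne
    by_contra hno
    push_neg at hno
    apply hne
    apply Finset.sum_eq_zero
    intro f hf
    rw [Finset.mem_filter] at hf
    exact absurd hf.2 (hno f hf.1)
  · rintro ⟨f, hf, hfu⟩
    have hpos : 0 < transitionMatrix S c u v := by
      apply Finset.sum_pos
      · intro g hg
        exact hc g (Finset.mem_filter.mp hg).1
      · exact ⟨f, Finset.mem_filter.mpr ⟨hf, hfu⟩⟩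
    exact hpos.ne'

/-- Proposition 7.2 of the paper: equivalent probabilistic sequential networks
have matching nonzero patterns of all powers of their transition matrices. -/
theorem psn_equiv_transition_pow_ne_zero_iff {α β : Type*}
    [Fintype α] [Nonempty α] [DecidableEq α] [Fintype β] [Nonempty β] [DecidableEq β]
    (S₁ : Finset (α → α)) (c : (α → α) → ℝ) (hc : ∀ f ∈ S₁, 0 < c f)
    (S₂ : Finset (β → β)) (d : (β → β) → ℝ) (hd : ∀ g ∈ S₂, 0 < d g)
    (h : α ≃ β) (μ : (α → α) → (β → β))
    (hbij : Set.BijOn μ (↑S₁) (↑S₂))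
    (hμ : ∀ f ∈ S₁, μ f = (h : α → β) ∘ f ∘ (h.symm : β → α)) :
    ∀ (m : ℕ) (u v : α),
      ((transitionMatrix S₁ c) ^ m) u v ≠ 0 ↔
        ((transitionMatrix S₂ d) ^ m) (h u) (h v) ≠ 0 := by
  have base : ∀ u v : α, transitionMatrix S₁ c u v ≠ 0 ↔
      transitionMatrix S₂ d (h u) (h v) ≠ 0 := by
    intro u v
    rw [transitionMatrix_ne_zero_iff S₁ c hc, transitionMatrix_ne_zero_iff S₂ d hd]
    constructor
    · rintro ⟨f, hf, hfu⟩
      refine ⟨μ f, hbij.mapsTo hf, ?_⟩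
      rw [hμ f hf]
      simp [hfu]
    · rintro ⟨g, hg, hgu⟩
      obtain ⟨f, hf, rfl⟩ := hbij.surjOn hg
      rw [hμ f hf] at hgu
      simp at hgu
      exact ⟨f, hf, hgu⟩
  intro m
  induction m with
  | zero =>
    intro u v
    simp [Matrix.one_apply, h.injective.eq_iff]
  | succ n ih =>
    intro u v
    rw [pow_succ', pow_succ', Matrix.mul_apply, Matrix.mul_apply]
    rw [← Equiv.sum_comp h
      (fun j => transitionMatrix S₂ d (h u) j * (transitionMatrix S₂ d ^ n) j (h v))]
    have h1 : ∀ j : α, 0 ≤ transitionMatrix S₁ c u j * (transitionMatrix S₁ c ^ n) j v :=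
      fun j => mul_nonneg (transitionMatrix_nonneg S₁ c hc u j)
        (transitionMatrix_pow_nonneg S₁ c hc n j v)
    have h2 : ∀ j : α, 0 ≤ transitionMatrix S₂ d (h u) (h j) *
        (transitionMatrix S₂ d ^ n) (h j) (h v) :=
      fun j => mul_nonneg (transitionMatrix_nonneg S₂ d hd (h u) (h j))
        (transitionMatrix_pow_nonneg S₂ d hd n (h j) (h v))
    rw [← not_iff_not]
    push_neg
    rw [Finset.sum_eq_zero_iff_of_nonneg (fun j _ => h1 j),
      Finset.sum_eq_zero_iff_of_nonneg (fun j _ => h2 j)]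
    constructor
    · intro H j _
      have := H j (Finset.mem_univ j)
      rcases mul_eq_zero.mp this with hz | hz
      · rw [not_not.mp ((not_iff_not.mpr (base u j)).mp (not_not_intro hz)), zero_mul]
      · rw [not_not.mp ((not_iff_not.mpr (ih j v)).mp (not_not_intro hz)), mul_zero]
    · intro H j _
      have := H j (Finset.mem_univ j)
      rcases mul_eq_zero.mp this with hz | hz
      · rw [not_not.mp ((not_iff_not.mpr (base u j)).mpr (not_not_intro hz)), zero_mul]
      · rw [not_not.mp ((not_iff_not.mpr (ih j v)).mpr (not_not_intro hz)), mul_zero]
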